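/- Under the identification of a pair (E, φ) of rank n and degree d with the triple (E, 𝒪, φ), the pair (E,φ) is τ-stable if and only if the triple is σ-stable for σ = (n+1)τ - d. Equivalently, the map τ ↦ (n+1)τ - d is a strictly increasing affine bijection from ℝ to ℝ taking the τ-stability condition to the σ-stability condition. -/

import Mathlib

/-!
STATEMENT 8: Under the identification of a pair `(E,φ)` of rank `n` and degree
`d` with the triple `(E, 𝒪, φ)` of type `(n,1,d,0)`, the pair is `τ`-stable iff
the triple is `σ`-stable for `σ = (n+1)τ − d`; moreover `τ ↦ (n+1)τ − d` is a
strictly increasing affine bijection of `ℝ`.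

We record the subobject data abstractly: `P ⊆ {1,…,n} × ℤ` is the set of
(rank, degree) of the nonzero subbundles `E' ⊆ E` (including `E` itself, which
gives the subtriple `(E',0)`), and `Pφ ⊆ P` those containing the section `φ`
(which for `E' ≠ E` give the subtriples `(E',𝒪)`).  The `σ`-slope of a
subtriple of type `(n',d',m)` (`m ∈ {0,1}`) is
`(d' + 0)/(n'+m) + σ·m/(n'+m)`, and `μ_σ(E,𝒪,φ) = d/(n+1) + σ/(n+1)`.
-/

/-- `τ`-stability of the pair, in terms of the subbundle data. -/
def PairStable (n : ℕ) (d : ℤ) (P Pphi : Set (ℕ × ℤ)) (τ : ℝ) : Prop :=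
  (∀ p ∈ P, (p.2 : ℝ) / (p.1 : ℝ) < τ) ∧
  (∀ p ∈ Pphi, p.1 < n → ((d - p.2 : ℤ) : ℝ) / ((n : ℝ) - p.1) > τ)

/-- `σ`-stability of the associated triple `(E, 𝒪, φ)`:
`μ_σ(T') < μ_σ(T)` for all proper subtriples `T' = (E',0)` or `(E',𝒪)`. -/
def TripleStable (n : ℕ) (d : ℤ) (P Pphi : Set (ℕ × ℤ)) (σ : ℝ) : Prop :=
  (∀ p ∈ P, (p.2 : ℝ) / (p.1 : ℝ) <
      (d : ℝ) / ((n : ℝ) + 1) + σ / ((n : ℝ) + 1)) ∧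
  (∀ p ∈ Pphi, p.1 < n →
      ((p.2 : ℝ) + σ) / ((p.1 : ℝ) + 1) <
        (d : ℝ) / ((n : ℝ) + 1) + σ / ((n : ℝ) + 1))

theorem pair_triple_stability_correspondence
    (n : ℕ) (hn : 1 ≤ n) (d : ℤ) (P Pphi : Set (ℕ × ℤ))
    (hPphi : Pphi ⊆ P)
    (hP : ∀ p ∈ P, 1 ≤ p.1 ∧ p.1 ≤ n) :
    StrictMono (fun τ : ℝ => ((n : ℝ) + 1) * τ - d) ∧
    Function.Bijective (fun τ : ℝ => ((n : ℝ) + 1) * τ - d) ∧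
    (∀ τ : ℝ,
      PairStable n d P Pphi τ ↔
        TripleStable n d P Pphi (((n : ℝ) + 1) * τ - d)) := by
  have hn1 : (0:ℝ) < (n:ℝ) + 1 := by positivity
  have hmono : StrictMono (fun τ : ℝ => ((n : ℝ) + 1) * τ - d) := by
    intro a b h; dsimp; nlinarith
  refine ⟨hmono, ⟨hmono.injective, fun y => ⟨(y + d) / ((n:ℝ)+1), by
    field_simp; ring⟩⟩, fun τ => ?_⟩
  have hkey : (d : ℝ) / ((n : ℝ) + 1) + (((n : ℝ) + 1) * τ - d) / ((n : ℝ) + 1) = τ := by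
    field_simp; ring
  unfold PairStable TripleStable
  rw [hkey]
  constructor
  · rintro ⟨h1, h2⟩
    refine ⟨h1, fun p hp hlt => ?_⟩
    have hnp : (0:ℝ) < (n:ℝ) - p.1 := by
      have := Nat.cast_lt (α := ℝ) |>.mpr hlt; linarith
    have := h2 p hp hlt
    rw [gt_iff_lt, lt_div_iff₀ hnp] at this
    rw [div_lt_iff₀ (by positivity)]
    push_cast at this ⊢
    nlinarith
  · rintro ⟨h1, h2⟩
    refine ⟨h1, fun p hp hlt => ?_⟩
    have hnp : (0:ℝ) < (n:ℝ) - p.1 := by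
      have := Nat.cast_lt (α := ℝ) |>.mpr hlt; linarith
    have := h2 p hp hlt
    rw [div_lt_iff₀ (by positivity)] at this
    rw [gt_iff_lt, lt_div_iff₀ hnp]
    push_cast at this ⊢
    nlinarith
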